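/- Let ε > 0, 0 < g₁ ≤ g₂, 0 < δ̄ ≤ c₁, τ > 0 with g₂·τ ≤ ε/(c₁ + 1)², and let t_k < t_{k+1} with t_{k+1} − t_k = τ. Let g, δ : ℝ → ℝ be integrable on [t_k, t_{k+1}] with g₁ ≤ g(s) ≤ g₂ and |δ(s)| ≤ δ̄ for all s ∈ [t_k, t_{k+1}]. Suppose (δ̄/(δ̄+1))·ε ≤ x_k ≤ (c₁/(c₁+1))·ε, and set u_k = −x_k/(ε − x_k) and x_{k+1} = x_k + ∫_{t_k}^{t_{k+1}} g(s)·(δ(s) + u_k) ds. Then −(δ̄/(δ̄+1))·ε ≤ x_{k+1} ≤ x_k. -/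

import Mathlib

open MeasureTheory intervalIntegral

set_option maxHeartbeats 1600000 in
/-- conclusion of Case 1 of Proposition 2: from the positive part of
Div 3, under the sampling restriction `g₂τ ≤ ε/(c₁+1)²`, one sampling step does not
increase the state and cannot jump below the lower boundary of Div 4. -/
theorem stmt_8 (ε g₁ g₂ δb c₁ τ tk tk1 xk uk xk1 : ℝ)
    (hε : 0 < ε) (hg₁ : 0 < g₁) (hg₁₂ : g₁ ≤ g₂)
    (hδb : 0 < δb) (hδc : δb ≤ c₁) (hτ : 0 < τ)
    (hsamp : g₂ * τ ≤ ε / (c₁ + 1) ^ 2)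
    (ht : tk < tk1) (hτ' : tk1 - tk = τ)
    (g δ : ℝ → ℝ)
    (hg_int : IntervalIntegrable g volume tk tk1)
    (hδ_int : IntervalIntegrable δ volume tk tk1)
    (hg_bd : ∀ s ∈ Set.Icc tk tk1, g₁ ≤ g s ∧ g s ≤ g₂)
    (hδ_bd : ∀ s ∈ Set.Icc tk tk1, |δ s| ≤ δb)
    (hxk_lb : (δb / (δb + 1)) * ε ≤ xk)
    (hxk_ub : xk ≤ (c₁ / (c₁ + 1)) * ε)
    (huk : uk = -xk / (ε - xk))
    (hxk1 : xk1 = xk + ∫ s in tk..tk1, g s * (δ s + uk)) :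
    -(δb / (δb + 1)) * ε ≤ xk1 ∧ xk1 ≤ xk := by
  have hc₁ : 0 < c₁ := lt_of_lt_of_le hδb hδc
  have hc1p : (0:ℝ) < c₁ + 1 := by linarith
  have hδ1p : (0:ℝ) < δb + 1 := by linarith
  -- E := ε - xk > 0
  have hE : 0 < ε - xk := by
    have : xk < ε := by
      have h1 : c₁ / (c₁ + 1) < 1 := by
        rw [div_lt_one hc1p]; linarith
      calc xk ≤ (c₁ / (c₁ + 1)) * ε := hxk_ub
        _ < 1 * ε := by nlinarith
        _ = ε := one_mul ε
    linarith
  have hxk_pos : 0 < xk := by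
    have : 0 < (δb / (δb + 1)) * ε := by positivity
    linarith
  -- a := xk / (ε - xk), δb ≤ a ≤ c₁
  set a := xk / (ε - xk) with ha
  have ha_ub : a ≤ c₁ := by
    rw [ha, div_le_iff₀ hE]
    have := hxk_ub
    rw [div_mul_eq_mul_div, le_div_iff₀ hc1p] at this
    nlinarith
  have ha_lb : δb ≤ a := by
    rw [ha, le_div_iff₀ hE]
    have := hxk_lb
    rw [div_mul_eq_mul_div, div_le_iff₀ hδ1p] at this
    nlinarith
  have huk' : uk = -a := by rw [huk, ha, neg_div]
  have hle : tk ≤ tk1 := le_of_lt ht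
  -- integrability of the integrand
  have hδu_int : IntervalIntegrable (fun s => δ s + uk) volume tk tk1 :=
    hδ_int.add intervalIntegrable_const
  have hprod_int : IntervalIntegrable (fun s => g s * (δ s + uk)) volume tk tk1 := by
    rw [intervalIntegrable_iff_integrableOn_Ioc_of_le hle] at hδu_int hg_int ⊢
    refine Integrable.bdd_mul (c := g₂) hδu_int hg_int.aestronglyMeasurable ?_
    filter_upwards [ae_restrict_mem measurableSet_Ioc] with s hs
    have hs' : s ∈ Set.Icc tk tk1 := Set.Ioc_subset_Icc_self hs
    obtain ⟨h1, h2⟩ := hg_bd s hs'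
    rw [Real.norm_eq_abs, abs_of_pos (lt_of_lt_of_le hg₁ h1)]
    exact h2
  -- pointwise bounds on the integrand
  have hbd : ∀ s ∈ Set.Icc tk tk1,
      -(g₂ * (δb + a)) ≤ g s * (δ s + uk) ∧ g s * (δ s + uk) ≤ 0 := by
    intro s hs
    obtain ⟨h1, h2⟩ := hg_bd s hs
    have h3 := hδ_bd s hs
    have hδlb : -δb ≤ δ s := (abs_le.mp h3).1
    have hδub : δ s ≤ δb := (abs_le.mp h3).2
    have hgpos : 0 < g s := lt_of_lt_of_le hg₁ h1
    constructor
    · have h4 : -(δb + a) ≤ δ s + uk := by rw [huk']; linarith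
      nlinarith
    · have h4 : δ s + uk ≤ 0 := by rw [huk']; linarith
      nlinarith
  -- integral bounds
  have hI_ub : (∫ s in tk..tk1, g s * (δ s + uk)) ≤ 0 := by
    have := intervalIntegral.integral_mono_on hle hprod_int
      intervalIntegrable_const (fun s hs => (hbd s hs).2)
    simpa using this
  have hI_lb : -(g₂ * (δb + a)) * τ ≤ ∫ s in tk..tk1, g s * (δ s + uk) := by
    have := intervalIntegral.integral_mono_on hle
      intervalIntegrable_const hprod_int (fun s hs => (hbd s hs).1)
    rw [intervalIntegral.integral_const, hτ', smul_eq_mul] at this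
    linarith
  constructor
  · -- lower bound
    have hg₂ : 0 < g₂ := lt_of_lt_of_le hg₁ hg₁₂
    have hδa : 0 < δb + a := by linarith
    have hstep : g₂ * (δb + a) * τ ≤ ε / (c₁ + 1) ^ 2 * (δb + a) := by
      have : g₂ * τ * (δb + a) ≤ ε / (c₁ + 1) ^ 2 * (δb + a) :=
        mul_le_mul_of_nonneg_right hsamp (le_of_lt hδa)
      linarith
    have hxk1_lb : xk - ε / (c₁ + 1) ^ 2 * (δb + a) ≤ xk1 := by
      rw [hxk1]; nlinarith
    -- arithmetic: xk - ε(δb+a)/(c₁+1)² ≥ -δb/(δb+1)·ε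
    have key : -(δb / (δb + 1)) * ε ≤ xk - ε / (c₁ + 1) ^ 2 * (δb + a) := by
      have hxa : xk * (1 + a) = a * ε := by
        rw [ha]; field_simp; ring
      have h1 : δb * ε / (c₁ + 1) ^ 2 ≤ δb * ε / (δb + 1) := by
        have hsq : δb + 1 ≤ (c₁ + 1) ^ 2 := by nlinarith
        rw [div_le_div_iff₀ (by positivity) hδ1p]
        nlinarith [mul_nonneg hδb.le hε.le]
      have h2 : a * ε / (c₁ + 1) ^ 2 ≤ xk := by
        rw [div_le_iff₀ (by positivity)]
        nlinarith [mul_le_mul_of_nonneg_left ha_ub hxk_pos.le,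
          mul_nonneg (mul_nonneg hxk_pos.le hc1p.le) hc₁.le]
      have : ε / (c₁ + 1) ^ 2 * (δb + a) = δb * ε / (c₁ + 1) ^ 2 + a * ε / (c₁ + 1) ^ 2 := by
        ring
      rw [this]
      have h3 : -(δb / (δb + 1)) * ε = -(δb * ε / (δb + 1)) := by ring
      linarith
    linarith
  · rw [hxk1]; linarith
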